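/- The sell option value in the N-step binomial model is nondecreasing in the volatility: with u(σ) = μ/N + σ/√N and d(σ) = μ/N − σ/√N for σ > |μ|/√N, the one-step option value opt^sell(σ) = q_u(σ)·max(S_ini + u(σ) − mc, 0) + q_d(σ)·max(S_ini + d(σ) − mc, 0) (case N = 1) is nondecreasing in σ. -/

import Mathlib

set_option maxHeartbeats 2000000 in

theorem one_step_option_value_monotone_in_volatility (μ S_ini mc : ℝ) :
    MonotoneOn (fun σ : ℝ =>
        ((σ - μ) / (2 * σ)) * max (S_ini + μ + σ - mc) 0 +
        ((σ + μ) / (2 * σ)) * max (S_ini + μ - σ - mc) 0)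
      (Set.Ioi |μ|) := by
  intro σ₁ h1 σ₂ h2 hle
  simp only [Set.mem_Ioi] at h1 h2
  obtain ⟨hm1, hp1⟩ := abs_lt.mp h1
  obtain ⟨hm2, hp2⟩ := abs_lt.mp h2
  have hs1 : (0:ℝ) < σ₁ := (abs_nonneg μ).trans_lt h1
  have hs2 : (0:ℝ) < σ₂ := (abs_nonneg μ).trans_lt h2
  simp only
  rw [div_mul_eq_mul_div, div_mul_eq_mul_div, ← add_div,
    div_mul_eq_mul_div, div_mul_eq_mul_div, ← add_div,
    div_le_div_iff₀ (by positivity) (by positivity)]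
  simp only [max_def]
  split_ifs with hA1 hB1 hA2 hB2 <;>
  nlinarith [mul_pos hs1 hs2, mul_nonneg hs1.le hs2.le,
    mul_nonneg (sub_nonneg.mpr hle) (sub_pos.mpr hp1).le,
    mul_nonneg (sub_nonneg.mpr hle) (by linarith : (0:ℝ) ≤ σ₁ + μ),
    mul_pos (sub_pos.mpr hp2) hs1, mul_pos (sub_pos.mpr hp1) hs2,
    mul_pos hs1 (by linarith : (0:ℝ) < σ₂ + μ),
    mul_pos hs2 (by linarith : (0:ℝ) < σ₁ + μ),
    mul_nonneg (sub_nonneg.mpr hle) (sub_nonneg.mpr hle),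
    sq_nonneg (σ₁ - σ₂), sq_nonneg (σ₁ + σ₂)]
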